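/- Fix an integer k ≥ 2. For every ε > 0 there exists M such that for all integers m ≥ M one has e_{k,m} ≤ m^{-(k-ε)m}. (That is, e_{k,m} ≤ m^{-(k-o(1))m} as m → ∞.) -/

import Mathlib

open scoped BigOperators

/-- A positive integer is *powerful* if every prime dividing it divides it with
multiplicity at least `2`. -/
def Powerful (f : ℕ) : Prop := 0 < f ∧ ∀ p : ℕ, p.Prime → p ∣ f → p ^ 2 ∣ f

/-- `omegaK k n` is the number of primes dividing `n` with multiplicity exactly `k`. -/
def omegaK (k n : ℕ) : ℕ := (n.primeFactors.filter fun p => n.factorization p = k).card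

/-- The density `e_{k,m}` of integers `n` with `ω_k(n) = m`. -/
noncomputable def ekm (k m : ℕ) : ℝ :=
  6 / Real.pi ^ 2 *
    ∑' f : {f : ℕ // Powerful f ∧ omegaK k f = m},
      ((f : ℕ) : ℝ)⁻¹ * ∏ p ∈ (f : ℕ).primeFactors, (1 + 1 / (p : ℝ))⁻¹

open scoped ENNReal


lemma tsum_pi_fin (w : ℕ → ℝ≥0∞) : ∀ m : ℕ,
    (∑' σ : Fin m → ℕ, ∏ i, w (σ i)) = (∑' n, w n) ^ m := by
  intro m
  induction m with
  | zero => rw [tsum_eq_single (fun i => i.elim0) (by intro b hb; exact absurd (funext fun i => i.elim0) hb)]; simp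
  | succ m ih =>
    rw [← (Fin.consEquiv (fun _ : Fin (m+1) => ℕ)).tsum_eq]
    rw [ENNReal.tsum_prod']
    have : ∀ (a : ℕ) (σ : Fin m → ℕ),
        (∏ i, w ((Fin.consEquiv (fun _ : Fin (m+1) => ℕ)) (a, σ) i)) = w a * ∏ i, w (σ i) := by
      intro a σ
      rw [Fin.prod_univ_succ]
      simp [Fin.consEquiv]
    simp only [this]
    rw [pow_succ, mul_comm ((∑' n, w n) ^ m), ← ih, ← ENNReal.tsum_mul_right]
    congr 1
    ext a
    exact ENNReal.tsum_mul_left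

lemma strict_sum_le (w : ℕ → ℝ≥0∞) (m : ℕ) :
    (m.factorial : ℝ≥0∞) * (∑' σ : {σ : Fin m → ℕ // StrictMono σ}, ∏ i, w (σ.1 i))
      ≤ (∑' n, w n) ^ m := by
  rw [← tsum_pi_fin]
  haveI : WellFoundedLT (Fin m) := inferInstance
  have hinj : Function.Injective
      (fun p : Equiv.Perm (Fin m) × {σ : Fin m → ℕ // StrictMono σ} => (p.2.1 ∘ p.1 : Fin m → ℕ)) := by
    rintro ⟨τ, σ, hσ⟩ ⟨τ', σ', hσ'⟩ h
    simp only at h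
    have hr : Set.range (σ ∘ τ) = Set.range (σ' ∘ τ') := by rw [h]
    rw [Set.range_comp, Set.range_comp, Equiv.range_eq_univ, Equiv.range_eq_univ,
      Set.image_univ, Set.image_univ] at hr
    have hσσ' : σ = σ' := (hσ.range_inj hσ').1 hr
    subst hσσ'
    have : τ = τ' := by
      ext i
      have := congrFun h i
      exact congrArg Fin.val (hσ.injective this)
    simp [this]
  have key := ENNReal.tsum_comp_le_tsum_of_injective hinj (fun σ : Fin m → ℕ => ∏ i, w (σ i))
  refine le_trans ?_ key
  rw [ENNReal.tsum_prod']
  have hval : ∀ (τ : Equiv.Perm (Fin m)) (σ : {σ : Fin m → ℕ // StrictMono σ}),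
      (∏ i, w ((σ.1 ∘ τ) i)) = ∏ i, w (σ.1 i) := by
    intro τ σ
    exact Equiv.prod_comp τ (fun i => w (σ.1 i))
  have : (∑' (τ : Equiv.Perm (Fin m)) (σ : {σ : Fin m → ℕ // StrictMono σ}),
      ∏ i, w (((fun p : Equiv.Perm (Fin m) × {σ : Fin m → ℕ // StrictMono σ} =>
        (p.2.1 ∘ p.1 : Fin m → ℕ)) (τ, σ)) i))
      = ∑' (_ : Equiv.Perm (Fin m)), (∑' σ : {σ : Fin m → ℕ // StrictMono σ}, ∏ i, w (σ.1 i)) := by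
    refine tsum_congr fun τ => tsum_congr fun σ => ?_
    exact hval τ σ
  have h3 : (∑' (_ : Equiv.Perm (Fin m)), (∑' σ : {σ : Fin m → ℕ // StrictMono σ}, ∏ i, w (σ.1 i)))
      = (m.factorial : ℝ≥0∞) * (∑' σ : {σ : Fin m → ℕ // StrictMono σ}, ∏ i, w (σ.1 i)) := by
    rw [tsum_fintype (f := fun _ : Equiv.Perm (Fin m) =>
      (∑' σ : {σ : Fin m → ℕ // StrictMono σ}, ∏ i, w (σ.1 i)))]
    rw [Finset.sum_const, Finset.card_univ, Fintype.card_perm, nsmul_eq_mul]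
    simp
  exact le_of_eq (h3.symm.trans this.symm)


lemma powerful_eq_sq_mul_cube {g : ℕ} (hg : Powerful g) :
    ∃ a b : ℕ, 0 < a ∧ 0 < b ∧ a ^ 2 * b ^ 3 = g := by
  obtain ⟨hg0, hgp⟩ := hg
  set e := g.factorization with he
  refine ⟨∏ p ∈ g.primeFactors, p ^ ((e p - if Odd (e p) then 3 else 0) / 2),
    ∏ p ∈ g.primeFactors.filter (fun p => Odd (e p)), p, ?_, ?_, ?_⟩
  · exact Finset.prod_pos fun p hp => pow_pos (Nat.pos_of_mem_primeFactors hp) _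
  · exact Finset.prod_pos fun p hp => Nat.pos_of_mem_primeFactors (Finset.mem_filter.1 hp).1
  · have hb : (∏ p ∈ g.primeFactors.filter (fun p => Odd (e p)), p)
        = ∏ p ∈ g.primeFactors, p ^ (if Odd (e p) then 1 else 0) := by
      rw [Finset.prod_filter]
      refine Finset.prod_congr rfl fun p _ => ?_
      split <;> simp
    rw [hb, ← Finset.prod_pow, ← Finset.prod_pow, ← Finset.prod_mul_distrib]
    have : ∀ p ∈ g.primeFactors,
        (p ^ ((e p - if Odd (e p) then 3 else 0) / 2)) ^ 2 * (p ^ (if Odd (e p) then 1 else 0)) ^ 3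
          = p ^ e p := by
      intro p hp
      rw [← pow_mul, ← pow_mul, ← pow_add]
      congr 1
      have h2 : 2 ≤ e p := by
        have hpp : p.Prime := Nat.prime_of_mem_primeFactors hp
        have : p ^ 2 ∣ g := hgp p hpp (Nat.dvd_of_mem_primeFactors hp)
        rwa [← Nat.Prime.pow_dvd_iff_le_factorization hpp hg0.ne']
      rcases Nat.even_or_odd (e p) with hev | hod
      · rw [if_neg (Nat.not_odd_iff_even.2 hev), if_neg (Nat.not_odd_iff_even.2 hev)]
        have := hev
        rw [Nat.even_iff] at this
        omega
      · rw [if_pos hod, if_pos hod]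
        have := hod
        rw [Nat.odd_iff] at this
        omega
    rw [Finset.prod_congr rfl this]
    have hval := Nat.factorization_prod_pow_eq_self hg0.ne'
    rw [Finsupp.prod] at hval
    rw [Nat.support_factorization] at hval
    exact hval

lemma tsum_shift_pow_ne_top (j : ℕ) (hj : 2 ≤ j) :
    (∑' x : ℕ, (((x + 1 : ℕ) : ℝ≥0∞) ^ j)⁻¹) ≠ ⊤ := by
  have hsum : Summable (fun x : ℕ => ((((x:ℝ) + 1)) ^ j)⁻¹) := by
    have := (Real.summable_one_div_nat_pow (p := j)).2 hj
    have h2 := (summable_nat_add_iff (f := fun n : ℕ => 1 / (n:ℝ) ^ j) 1).2 this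
    simpa [one_div] using h2
  have hofr : ∀ x : ℕ, ENNReal.ofReal ((((x:ℝ) + 1)) ^ j)⁻¹ = (((x + 1 : ℕ) : ℝ≥0∞) ^ j)⁻¹ := by
    intro x
    rw [ENNReal.ofReal_inv_of_pos (by positivity), ENNReal.ofReal_pow (by positivity)]
    rw [ENNReal.ofReal_add (by positivity) (by norm_num), ENNReal.ofReal_natCast, ENNReal.ofReal_one]
    push_cast
    ring
  rw [← tsum_congr hofr] at *
  rw [← ENNReal.ofReal_tsum_of_nonneg (fun x => by positivity) hsum]
  exact ENNReal.ofReal_ne_top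

lemma powerful_tsum_ne_top :
    (∑' g : {g : ℕ // Powerful g}, ((g : ℕ) : ℝ≥0∞)⁻¹) ≠ ⊤ := by
  classical
  have hex : ∀ g : {g : ℕ // Powerful g}, ∃ ab : ℕ × ℕ,
      ((ab.1 + 1) ^ 2 * (ab.2 + 1) ^ 3 : ℕ) = (g : ℕ) := by
    rintro ⟨g, hg⟩
    obtain ⟨a, b, ha, hb, hab⟩ := powerful_eq_sq_mul_cube hg
    exact ⟨(a - 1, b - 1), by simpa [Nat.sub_add_cancel ha, Nat.sub_add_cancel hb] using hab⟩
  choose j hj using hex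
  have hinj : Function.Injective j := by
    intro g g' h
    have h2 := (hj g).symm.trans (h ▸ hj g')
    exact Subtype.ext h2
  have key := ENNReal.tsum_comp_le_tsum_of_injective hinj
    (fun ab : ℕ × ℕ => (((ab.1 + 1 : ℕ) : ℝ≥0∞) ^ 2)⁻¹ * (((ab.2 + 1 : ℕ) : ℝ≥0∞) ^ 3)⁻¹)
  have hle : (∑' g : {g : ℕ // Powerful g}, ((g : ℕ) : ℝ≥0∞)⁻¹)
      ≤ ∑' ab : ℕ × ℕ, (((ab.1 + 1 : ℕ) : ℝ≥0∞) ^ 2)⁻¹ * (((ab.2 + 1 : ℕ) : ℝ≥0∞) ^ 3)⁻¹ := by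
    refine le_trans (le_of_eq ?_) key
    refine tsum_congr fun g => ?_
    rw [← ENNReal.mul_inv (by left; positivity) (by left; exact ENNReal.pow_ne_top (ENNReal.natCast_ne_top _))]
    rw [← Nat.cast_pow, ← Nat.cast_pow, ← Nat.cast_mul, hj g]
  refine ne_top_of_le_ne_top ?_ hle
  rw [ENNReal.tsum_prod']
  simp_rw [ENNReal.tsum_mul_left, ENNReal.tsum_mul_right]
  exact ENNReal.mul_ne_top (tsum_shift_pow_ne_top 2 le_rfl) (tsum_shift_pow_ne_top 3 (by norm_num))


lemma pow_self_le_exp_mul_factorial : ∀ n : ℕ, (n : ℝ) ^ n ≤ Real.exp n * n.factorial := by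
  intro n
  induction n with
  | zero => simp
  | succ n ih =>
    have hstep : ((n : ℝ) + 1) ^ n ≤ Real.exp 1 * (n : ℝ) ^ n := by
      rcases Nat.eq_zero_or_pos n with rfl | hn
      · simpa using Real.one_le_exp (by norm_num)
      · have hn' : (0:ℝ) < n := by exact_mod_cast hn
        have h1 : (n : ℝ) + 1 ≤ (n : ℝ) * Real.exp (1 / n) := by
          have := Real.add_one_le_exp (1 / (n:ℝ))
          calc (n:ℝ) + 1 = (n:ℝ) * (1 + 1/n) := by field_simp
            _ ≤ (n:ℝ) * Real.exp (1/n) := by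
                nlinarith [Real.add_one_le_exp (1 / (n:ℝ))]
        calc ((n:ℝ)+1)^n ≤ ((n:ℝ) * Real.exp (1/n))^n := by
              exact pow_le_pow_left₀ (by positivity) h1 n
          _ = (n:ℝ)^n * (Real.exp (1/n))^n := mul_pow _ _ _
          _ = (n:ℝ)^n * Real.exp 1 := by
              rw [← Real.exp_nat_mul]
              congr 1
              field_simp
          _ = Real.exp 1 * (n:ℝ)^n := by ring
    have hcast : ((n + 1 : ℕ) : ℝ) = (n:ℝ) + 1 := by push_cast; ring
    calc ((n+1:ℕ):ℝ) ^ (n+1) = ((n:ℝ)+1)^n * ((n:ℝ)+1) := by rw [hcast, pow_succ]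
      _ ≤ (Real.exp 1 * (n:ℝ)^n) * ((n:ℝ)+1) := by
          apply mul_le_mul_of_nonneg_right hstep (by positivity)
      _ ≤ (Real.exp 1 * (Real.exp n * n.factorial)) * ((n:ℝ)+1) := by
          apply mul_le_mul_of_nonneg_right _ (by positivity)
          exact mul_le_mul_of_nonneg_left ih (le_of_lt (Real.exp_pos 1))
      _ = Real.exp (n+1) * ((n+1) * n.factorial) := by
          rw [Real.exp_add]; ring
      _ = Real.exp ((n+1:ℕ)) * ((n+1:ℕ).factorial : ℝ) := by
          rw [Nat.factorial_succ]
          push_cast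
          ring

lemma factorization_prod_pow_eq (S : Finset ℕ) (hS : ∀ p ∈ S, p.Prime) (k q : ℕ) :
    (∏ p ∈ S, p ^ k).factorization q = if q ∈ S then k else 0 := by
  classical
  rw [Nat.factorization_prod (fun p hp => pow_ne_zero k (hS p hp).pos.ne')]
  rw [Finset.sum_apply']
  rw [Finset.sum_congr rfl (fun p hp => by
    rw [Nat.Prime.factorization_pow (hS p hp), Finsupp.single_apply])]
  exact Finset.sum_ite_eq' S q fun _ => k

lemma exists_decomp (k m : ℕ) (f : ℕ) (hf : Powerful f) (hm : omegaK k f = m) :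
    ∃ (σ : Fin m → ℕ) (g : ℕ), StrictMono σ ∧ Powerful g ∧ (∀ i, (σ i).Prime) ∧
      (∏ i, (σ i) ^ k) * g = f := by
  classical
  set S := f.primeFactors.filter (fun p => f.factorization p = k) with hSdef
  have hcard : S.card = m := hm
  have hf0 : f ≠ 0 := hf.1.ne'
  have hSprime : ∀ p ∈ S, p.Prime := fun p hp =>
    Nat.prime_of_mem_primeFactors (Finset.mem_filter.1 hp).1
  have hSfact : ∀ p ∈ S, f.factorization p = k := fun p hp => (Finset.mem_filter.1 hp).2
  set sval := ∏ p ∈ S, p ^ k with hsval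
  have hsval0 : sval ≠ 0 :=
    Finset.prod_ne_zero_iff.2 fun p hp => pow_ne_zero k (hSprime p hp).pos.ne'
  have hfact : ∀ q, sval.factorization q = if q ∈ S then k else 0 :=
    factorization_prod_pow_eq S hSprime k
  have hdvd : sval ∣ f := by
    rw [← Nat.factorization_le_iff_dvd hsval0 hf0]
    intro q
    rw [hfact q]
    split
    · next hq => exact le_of_eq (hSfact q hq).symm
    · exact Nat.zero_le _
  set g := f / sval with hg
  have heq : sval * g = f := Nat.mul_div_cancel' hdvd
  have hg0 : g ≠ 0 := by
    intro h
    rw [h, mul_zero] at heq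
    exact hf0 heq.symm
  have hgdvd : g ∣ f := Dvd.intro_left sval heq
  have hgfact : ∀ q, g.factorization q = f.factorization q - sval.factorization q := by
    intro q
    rw [hg, Nat.factorization_div hdvd]
    simp
  have hgpow : Powerful g := by
    refine ⟨Nat.pos_of_ne_zero hg0, fun p hp hpg => ?_⟩
    have hpS : p ∉ S := by
      intro hpS
      have h1 : 0 < g.factorization p := hp.factorization_pos_of_dvd hg0 hpg
      rw [hgfact p, hfact p, if_pos hpS, hSfact p hpS] at h1
      omega
    have h2 : g.factorization p = f.factorization p := by
      rw [hgfact p, hfact p, if_neg hpS]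
      omega
    have hpf : p ∣ f := hpg.trans hgdvd
    have h3 : 2 ≤ f.factorization p := by
      rw [← Nat.Prime.pow_dvd_iff_le_factorization hp hf0]
      exact hf.2 p hp hpf
    rw [Nat.Prime.pow_dvd_iff_le_factorization hp hg0, h2]
    exact h3
  refine ⟨fun i => S.orderEmbOfFin hcard i, g, (S.orderEmbOfFin hcard).strictMono,
    hgpow, fun i => hSprime _ (Finset.orderEmbOfFin_mem S hcard i), ?_⟩
  have hprod : (∏ i, (S.orderEmbOfFin hcard i) ^ k) = sval := by
    rw [hsval, ← Finset.prod_attach S (fun p => p ^ k)]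
    exact Equiv.prod_comp (S.orderIsoOfFin hcard).toEquiv (fun x : {x // x ∈ S} => (x : ℕ) ^ k)
  rw [hprod, heq]

lemma strictMono_prime_lb {m : ℕ} {σ : Fin m → ℕ} (hσ : StrictMono σ)
    (hp : ∀ i, (σ i).Prime) : ∀ i : Fin m, (i : ℕ) + 2 ≤ σ i := by
  have key : ∀ j : ℕ, ∀ h : j < m, j + 2 ≤ σ ⟨j, h⟩ := by
    intro j
    induction j with
    | zero => intro h; simpa using (hp ⟨0, h⟩).two_le
    | succ j ih =>
      intro h
      have hj : j < m := Nat.lt_of_succ_lt h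
      have h1 : σ ⟨j, hj⟩ < σ ⟨j + 1, h⟩ := hσ (by simp [Fin.mk_lt_mk])
      have h2 := ih hj
      omega
  intro i
  have := key i.val i.isLt
  simpa using this

noncomputable def wf (t : ℝ) (n : ℕ) : ℝ≥0∞ := if 2 ≤ n then ((n : ℕ) : ℝ≥0∞) ^ (-t) else 0

lemma factor_bound (k : ℕ) (t : ℝ) (hts : 0 ≤ (k : ℝ) - t) {p : ℕ} (hp : 2 ≤ p)
    {c : ℕ} (hc : c + 1 ≤ p) :
    (((p : ℕ) : ℝ≥0∞) ^ k)⁻¹ ≤ (((c + 1 : ℕ)) : ℝ≥0∞) ^ (-((k : ℝ) - t)) * wf t p := by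
  have hp0 : ((p : ℕ) : ℝ≥0∞) ≠ 0 := by
    simp only [ne_eq, Nat.cast_eq_zero]; omega
  have hpt : ((p : ℕ) : ℝ≥0∞) ≠ ⊤ := ENNReal.natCast_ne_top p
  rw [wf, if_pos hp]
  rw [← ENNReal.rpow_natCast ((p : ℕ) : ℝ≥0∞) k, ← ENNReal.rpow_neg]
  have hsplit : -((k : ℝ)) = -((k : ℝ) - t) + -t := by ring
  rw [hsplit, ENNReal.rpow_add _ _ hp0 hpt]
  apply mul_le_mul_left
  rw [ENNReal.rpow_neg, ENNReal.rpow_neg]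
  apply ENNReal.inv_le_inv.2
  apply ENNReal.rpow_le_rpow _ hts
  exact_mod_cast hc

lemma main_bound (k m : ℕ) (t : ℝ) (hts : 0 ≤ (k : ℝ) - t) :
    (∑' f : {f : ℕ // Powerful f ∧ omegaK k f = m},
        ENNReal.ofReal (((f : ℕ) : ℝ)⁻¹ * ∏ p ∈ (f : ℕ).primeFactors, (1 + 1 / (p : ℝ))⁻¹))
      ≤ ((m.factorial : ℝ≥0∞)) ^ (-(((k : ℝ) - t) + 1)) * (∑' n, wf t n) ^ m
          * (∑' g : {g : ℕ // Powerful g}, ((g : ℕ) : ℝ≥0∞)⁻¹) := by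
  classical
  choose σ g hσ hg hprime heq using
    (fun f : {f : ℕ // Powerful f ∧ omegaK k f = m} => exists_decomp k m f.1 f.2.1 f.2.2)
  set J : {f : ℕ // Powerful f ∧ omegaK k f = m} →
      {σ : Fin m → ℕ // StrictMono σ} × {g : ℕ // Powerful g} :=
    fun f => (⟨σ f, hσ f⟩, ⟨g f, hg f⟩) with hJ
  have hJinj : Function.Injective J := by
    intro f f' h
    rw [hJ] at h
    simp only [Prod.mk.injEq, Subtype.mk.injEq] at h
    apply Subtype.ext
    rw [← heq f, ← heq f', h.1, h.2]
  set G : {σ : Fin m → ℕ // StrictMono σ} × {g : ℕ // Powerful g} → ℝ≥0∞ :=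
    fun x => (∏ i : Fin m, (((i : ℕ) + 1 : ℕ) : ℝ≥0∞) ^ (-((k : ℝ) - t)) * wf t (x.1.1 i))
      * ((x.2 : ℕ) : ℝ≥0∞)⁻¹ with hG
  have hpoint : ∀ f : {f : ℕ // Powerful f ∧ omegaK k f = m},
      ENNReal.ofReal (((f : ℕ) : ℝ)⁻¹ * ∏ p ∈ (f : ℕ).primeFactors, (1 + 1 / (p : ℝ))⁻¹)
        ≤ G (J f) := by
    intro f
    have hf0 : 0 < (f : ℕ) := f.2.1.1
    have hg0 : 0 < g f := (hg f).1
    -- step 1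
    have hprod01 : (∏ p ∈ (f : ℕ).primeFactors, (1 + 1 / (p : ℝ))⁻¹) ≤ 1 := by
      apply Finset.prod_le_one
      · intro p hp
        positivity
      · intro p hp
        rw [inv_le_one_iff₀]
        right
        have : (0:ℝ) < p := by exact_mod_cast (Nat.prime_of_mem_primeFactors hp).pos
        have h1p : 0 < 1 / (p:ℝ) := by positivity
        linarith
    have h1 : ENNReal.ofReal (((f : ℕ) : ℝ)⁻¹ * ∏ p ∈ (f : ℕ).primeFactors, (1 + 1 / (p : ℝ))⁻¹)
        ≤ (((f : ℕ) : ℕ) : ℝ≥0∞)⁻¹ := by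
      have : (((f : ℕ) : ℝ)⁻¹ * ∏ p ∈ (f : ℕ).primeFactors, (1 + 1 / (p : ℝ))⁻¹)
          ≤ ((f : ℕ) : ℝ)⁻¹ := by
        apply mul_le_of_le_one_right (by positivity) hprod01
      refine le_trans (ENNReal.ofReal_le_ofReal this) ?_
      rw [ENNReal.ofReal_inv_of_pos (by exact_mod_cast hf0), ENNReal.ofReal_natCast]
    refine le_trans h1 ?_
    -- step 2
    have hcast : (((f : ℕ) : ℕ) : ℝ≥0∞) = (∏ i, (((σ f) i : ℕ) : ℝ≥0∞) ^ k) * ((g f : ℕ) : ℝ≥0∞) := by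
      rw [← heq f]
      push_cast
      rfl
    have hfinv : (((f : ℕ) : ℕ) : ℝ≥0∞)⁻¹
        = (∏ i, ((((σ f) i : ℕ) : ℝ≥0∞) ^ k))⁻¹ * ((g f : ℕ) : ℝ≥0∞)⁻¹ := by
      rw [hcast, ENNReal.mul_inv (Or.inr (ENNReal.natCast_ne_top _))
        (Or.inr (by exact_mod_cast hg0.ne'))]
    refine le_trans (le_of_eq hfinv) ?_
    rw [hG]
    simp only
    apply mul_le_mul_left
    rw [ENNReal.prod_inv_distrib (fun i _ j _ _ => Or.inl (by
      apply pow_ne_zero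
      simp only [ne_eq, Nat.cast_eq_zero]
      exact (hprime f i).pos.ne'))]
    apply Finset.prod_le_prod'
    intro i _
    have hlb := strictMono_prime_lb (hσ f) (hprime f) i
    exact factor_bound k t hts (hprime f i).two_le (by omega)
  have hsum1 : (∑' f : {f : ℕ // Powerful f ∧ omegaK k f = m},
      ENNReal.ofReal (((f : ℕ) : ℝ)⁻¹ * ∏ p ∈ (f : ℕ).primeFactors, (1 + 1 / (p : ℝ))⁻¹))
      ≤ ∑' x : {σ : Fin m → ℕ // StrictMono σ} × {g : ℕ // Powerful g}, G x :=
    le_trans (ENNReal.tsum_le_tsum hpoint) (ENNReal.tsum_comp_le_tsum_of_injective hJinj G)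
  refine le_trans hsum1 ?_
  rw [ENNReal.tsum_prod']
  simp only [hG]
  simp_rw [ENNReal.tsum_mul_left, ENNReal.tsum_mul_right, Finset.prod_mul_distrib]
  set A := ∏ i : Fin m, (((i : ℕ) + 1 : ℕ) : ℝ≥0∞) ^ (-((k : ℝ) - t)) with hA
  set C := ∑' n, wf t n with hC
  set D := ∑' g : {g : ℕ // Powerful g}, ((g : ℕ) : ℝ≥0∞)⁻¹ with hD
  have hstrict : (∑' σs : {σ : Fin m → ℕ // StrictMono σ}, ∏ i, wf t (σs.1 i))
      ≤ (m.factorial : ℝ≥0∞)⁻¹ * C ^ m := by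
    have h := strict_sum_le (wf t) m
    have hne0 : (m.factorial : ℝ≥0∞) ≠ 0 := by
      simp only [ne_eq, Nat.cast_eq_zero]
      exact m.factorial_ne_zero
    calc (∑' σs : {σ : Fin m → ℕ // StrictMono σ}, ∏ i, wf t (σs.1 i))
        = (m.factorial : ℝ≥0∞)⁻¹ * ((m.factorial : ℝ≥0∞)
            * ∑' σs : {σ : Fin m → ℕ // StrictMono σ}, ∏ i, wf t (σs.1 i)) := by
          rw [← mul_assoc, ENNReal.inv_mul_cancel hne0 (ENNReal.natCast_ne_top _), one_mul]
      _ ≤ (m.factorial : ℝ≥0∞)⁻¹ * C ^ m := by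
          exact mul_le_mul_right h _
  have hAval : A = ((m.factorial : ℕ) : ℝ≥0∞) ^ (-((k : ℝ) - t)) := by
    rw [hA, ENNReal.prod_rpow_of_ne_top (fun i _ => ENNReal.natCast_ne_top _)]
    congr 1
    rw [← Nat.cast_prod]
    congr 1
    rw [Fin.prod_univ_eq_prod_range (fun i => i + 1) m]
    exact Finset.prod_range_add_one_eq_factorial m
  calc (∑' σs : {σ : Fin m → ℕ // StrictMono σ}, A * ∏ i, wf t (σs.1 i)) * D
      = A * (∑' σs : {σ : Fin m → ℕ // StrictMono σ}, ∏ i, wf t (σs.1 i)) * D := by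
        rw [ENNReal.tsum_mul_left]
    _ ≤ A * ((m.factorial : ℝ≥0∞)⁻¹ * C ^ m) * D := by
        apply mul_le_mul_left
        exact mul_le_mul_right hstrict _
    _ = (m.factorial : ℝ≥0∞) ^ (-(((k : ℝ) - t) + 1)) * C ^ m * D := by
        have hsp : -(((k : ℝ) - t) + 1) = -((k : ℝ) - t) + (-1) := by ring
        rw [hAval, hsp, ENNReal.rpow_add _ _ (by
            simp only [ne_eq, Nat.cast_eq_zero]; exact m.factorial_ne_zero)
          (ENNReal.natCast_ne_top _), ENNReal.rpow_neg_one]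
        ring


lemma wf_tsum_ne_top {t : ℝ} (ht : 1 < t) : (∑' n, wf t n) ≠ ⊤ := by
  have hsum0 : Summable (fun n : ℕ => ((n : ℝ) ^ t)⁻¹) := Real.summable_nat_rpow_inv.2 ht
  have hsum : Summable (fun n : ℕ => if 2 ≤ n then ((n : ℝ)) ^ (-t) else 0) := by
    apply Summable.of_nonneg_of_le _ _ hsum0
    · intro n
      split
      · positivity
      · exact le_rfl
    · intro n
      split
      · next h =>
        rw [Real.rpow_neg (by positivity)]
      · positivity
  have hofr : ∀ n : ℕ, wf t n = ENNReal.ofReal (if 2 ≤ n then ((n : ℝ)) ^ (-t) else 0) := by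
    intro n
    rw [wf]
    split
    · next h =>
      rw [← ENNReal.ofReal_natCast n, ← ENNReal.ofReal_rpow_of_pos (by exact_mod_cast (by omega : 0 < n))]
    · simp
  rw [tsum_congr hofr, ← ENNReal.ofReal_tsum_of_nonneg (fun n => by split <;> positivity) hsum]
  exact ENNReal.ofReal_ne_top

theorem ekm_decay (k : ℕ) (hk : 2 ≤ k) :
    ∀ ε : ℝ, 0 < ε → ∃ M : ℕ, ∀ m : ℕ, M ≤ m →
      ekm k m ≤ (m : ℝ) ^ (-(((k : ℝ) - ε) * m)) := by
  intro ε hε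
  set δ : ℝ := min ε 1 / 2 with hδdef
  have hδ0 : 0 < δ := by
    have : 0 < min ε 1 := lt_min hε one_pos
    positivity
  have hδle : δ ≤ 1 / 2 := by
    rw [hδdef]
    have : min ε 1 ≤ 1 := min_le_right _ _
    linarith
  set t : ℝ := 1 + δ with htdef
  have ht1 : 1 < t := by rw [htdef]; linarith
  have hts : 0 ≤ (k : ℝ) - t := by
    have hk2 : (2 : ℝ) ≤ (k : ℝ) := by exact_mod_cast hk
    rw [htdef]; linarith
  set q : ℝ := ((k : ℝ) - t) + 1 with hqdef
  have hq0 : 0 ≤ q := by rw [hqdef]; linarith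
  have hqk : q ≤ (k : ℝ) := by rw [hqdef, htdef]; linarith
  set C := ∑' n, wf t n with hCdef
  set D := ∑' g : {g : ℕ // Powerful g}, ((g : ℕ) : ℝ≥0∞)⁻¹ with hDdef
  have hC : C ≠ ⊤ := wf_tsum_ne_top ht1
  have hD : D ≠ ⊤ := powerful_tsum_ne_top
  set Cr := C.toReal with hCrdef
  set Dr := D.toReal with hDrdef
  have hCr0 : 0 ≤ Cr := ENNReal.toReal_nonneg
  have hDr0 : 0 ≤ Dr := ENNReal.toReal_nonneg
  set A : ℝ := max (Cr * Real.exp k) 1 with hAdef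
  set K : ℝ := max Dr 1 with hKdef
  have hA1 : (1 : ℝ) ≤ A := le_max_right _ _
  have hK1 : (1 : ℝ) ≤ K := le_max_right _ _
  obtain ⟨M0, hM0⟩ := exists_nat_ge ((K * A) ^ (1 / δ) : ℝ)
  refine ⟨max M0 2, fun m hm => ?_⟩
  have hm2 : 2 ≤ m := le_trans (le_max_right _ _) hm
  have hmM0 : (M0 : ℝ) ≤ (m : ℝ) := by exact_mod_cast le_trans (le_max_left _ _) hm
  have hX0 : (0 : ℝ) < (m : ℝ) := by exact_mod_cast (by omega : 0 < m)
  have hX1 : (1 : ℝ) ≤ (m : ℝ) := by exact_mod_cast (by omega : 1 ≤ m)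
  -- the series
  have hterm0 : ∀ f : {f : ℕ // Powerful f ∧ omegaK k f = m},
      0 ≤ ((f : ℕ) : ℝ)⁻¹ * ∏ p ∈ (f : ℕ).primeFactors, (1 + 1 / (p : ℝ))⁻¹ := by
    intro f
    apply mul_nonneg (by positivity)
    apply Finset.prod_nonneg
    intro p hp
    positivity
  set S : ℝ := ∑' f : {f : ℕ // Powerful f ∧ omegaK k f = m},
      ((f : ℕ) : ℝ)⁻¹ * ∏ p ∈ (f : ℕ).primeFactors, (1 + 1 / (p : ℝ))⁻¹ with hSdef
  have hS0 : 0 ≤ S := tsum_nonneg hterm0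
  have hekm : ekm k m ≤ S := by
    rw [ekm]
    have hpi : 6 / Real.pi ^ 2 ≤ 1 := by
      rw [div_le_one (by positivity)]
      nlinarith [Real.pi_gt_three]
    calc 6 / Real.pi ^ 2 * S ≤ 1 * S :=
          mul_le_mul_of_nonneg_right hpi hS0
      _ = S := one_mul S
  set BE : ℝ≥0∞ := ((m.factorial : ℝ≥0∞)) ^ (-q) * C ^ m * D with hBEdef
  have hBne : BE ≠ ⊤ := by
    rw [hBEdef]
    apply ENNReal.mul_ne_top
    apply ENNReal.mul_ne_top
    · rw [ENNReal.rpow_neg, ne_eq, ENNReal.inv_eq_top]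
      exact (ENNReal.rpow_pos (by exact_mod_cast m.factorial_pos) (ENNReal.natCast_ne_top _)).ne'
    · exact ENNReal.pow_ne_top hC
    · exact hD
  have hSle : S ≤ BE.toReal := by
    have hrep : S = (∑' f : {f : ℕ // Powerful f ∧ omegaK k f = m},
        ENNReal.ofReal (((f : ℕ) : ℝ)⁻¹ * ∏ p ∈ (f : ℕ).primeFactors, (1 + 1 / (p : ℝ))⁻¹)).toReal := by
      rw [ENNReal.tsum_toReal_eq (fun f => ENNReal.ofReal_ne_top)]
      exact tsum_congr fun f => (ENNReal.toReal_ofReal (hterm0 f)).symm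
    rw [hrep]
    apply ENNReal.toReal_mono hBne
    exact main_bound k m t hts
  have hBtoReal : BE.toReal = ((m.factorial : ℝ)) ^ (-q) * Cr ^ m * Dr := by
    rw [hBEdef, ENNReal.toReal_mul, ENNReal.toReal_mul, ← ENNReal.toReal_rpow,
      ENNReal.toReal_pow, ENNReal.toReal_natCast]
  -- real arithmetic
  have key : ((m.factorial : ℝ)) ^ (-q) * Cr ^ m * Dr
      ≤ (m : ℝ) ^ (-(((k : ℝ) - min ε 1) * m)) := by
    set X : ℝ := (m : ℝ) with hXdef
    have hfac := pow_self_le_exp_mul_factorial m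
    have hL0 : (0 : ℝ) < X ^ (m : ℝ) / Real.exp m :=
      div_pos (Real.rpow_pos_of_pos hX0 _) (Real.exp_pos _)
    have hfacR : X ^ (m : ℝ) / Real.exp m ≤ (m.factorial : ℝ) := by
      rw [Real.rpow_natCast, div_le_iff₀ (Real.exp_pos _)]
      calc X ^ m ≤ Real.exp m * m.factorial := hfac
        _ = (m.factorial : ℝ) * Real.exp m := by ring
    have h1 : ((m.factorial : ℝ)) ^ (-q) ≤ (X ^ (m : ℝ) / Real.exp m) ^ (-q) := by
      rw [Real.rpow_neg (by positivity), Real.rpow_neg hL0.le]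
      apply inv_anti₀ (Real.rpow_pos_of_pos hL0 q)
      exact Real.rpow_le_rpow hL0.le hfacR hq0
    have h2 : (X ^ (m : ℝ) / Real.exp m) ^ (-q) = X ^ (-(q * m)) * Real.exp (q * m) := by
      rw [Real.div_rpow (Real.rpow_nonneg hX0.le _) (Real.exp_pos _).le,
        ← Real.rpow_mul hX0.le, ← Real.exp_mul,
        show (m : ℝ) * (-q) = -(q * (m : ℝ)) by ring, Real.exp_neg, div_inv_eq_mul]
    have hKAX : K * A ≤ X ^ δ := by
      have hKA0 : (0 : ℝ) ≤ K * A := by positivity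
      have hrw : ((K * A) ^ ((1 : ℝ) / δ)) ^ δ = K * A := by
        rw [← Real.rpow_mul hKA0, one_div, inv_mul_cancel₀ hδ0.ne', Real.rpow_one]
      have h := Real.rpow_le_rpow (Real.rpow_nonneg hKA0 _) (le_trans hM0 hmM0) hδ0.le
      rw [hrw] at h
      exact h
    have h3 : Real.exp (q * m) * Cr ^ m * Dr ≤ X ^ (δ * (m : ℝ)) := by
      have hexpq : Real.exp (q * (m : ℝ)) = (Real.exp q) ^ m := by
        rw [Real.exp_mul, Real.rpow_natCast]
      have hCrA : Cr * Real.exp q ≤ A := by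
        calc Cr * Real.exp q ≤ Cr * Real.exp k :=
              mul_le_mul_of_nonneg_left (Real.exp_le_exp.2 hqk) hCr0
          _ ≤ A := le_max_left _ _
      have hA0 : (0 : ℝ) ≤ A := by linarith
      calc Real.exp (q * m) * Cr ^ m * Dr = (Cr * Real.exp q) ^ m * Dr := by
            rw [hexpq, mul_pow]; ring
        _ ≤ A ^ m * K := by
            apply mul_le_mul (pow_le_pow_left₀ (by positivity) hCrA m) (le_max_left _ _)
              hDr0 (pow_nonneg hA0 m)
        _ ≤ (K * A) ^ m := by
            rw [mul_pow]
            calc A ^ m * K ≤ A ^ m * K ^ m := by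
                  apply mul_le_mul_of_nonneg_left (le_self_pow₀ hK1 (by omega)) (pow_nonneg hA0 m)
              _ = K ^ m * A ^ m := by ring
        _ ≤ (X ^ δ) ^ m := pow_le_pow_left₀ (by positivity) hKAX m
        _ = X ^ (δ * (m : ℝ)) := by
            rw [← Real.rpow_natCast (X ^ δ) m, ← Real.rpow_mul hX0.le]
    calc ((m.factorial : ℝ)) ^ (-q) * Cr ^ m * Dr
        ≤ (X ^ (-(q * m)) * Real.exp (q * m)) * Cr ^ m * Dr := by
          apply mul_le_mul_of_nonneg_right
            (mul_le_mul_of_nonneg_right (h1.trans_eq h2) (pow_nonneg hCr0 m)) hDr0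
      _ = X ^ (-(q * m)) * (Real.exp (q * m) * Cr ^ m * Dr) := by ring
      _ ≤ X ^ (-(q * m)) * X ^ (δ * (m : ℝ)) :=
          mul_le_mul_of_nonneg_left h3 (Real.rpow_nonneg hX0.le _)
      _ = X ^ (-(q * m) + δ * (m : ℝ)) := (Real.rpow_add hX0 _ _).symm
      _ = (m : ℝ) ^ (-(((k : ℝ) - min ε 1) * m)) := by
          congr 1
          rw [hqdef, htdef, hδdef]
          ring
  have hfinal : (m : ℝ) ^ (-(((k : ℝ) - min ε 1) * m)) ≤ (m : ℝ) ^ (-(((k : ℝ) - ε) * m)) := by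
    apply Real.rpow_le_rpow_of_exponent_le hX1
    have h1 : min ε 1 ≤ ε := min_le_left _ _
    have h2 : ((k : ℝ) - ε) * m ≤ ((k : ℝ) - min ε 1) * m := by
      apply mul_le_mul_of_nonneg_right _ (le_of_lt hX0)
      linarith
    linarith
  calc ekm k m ≤ S := hekm
    _ ≤ BE.toReal := hSle
    _ = ((m.factorial : ℝ)) ^ (-q) * Cr ^ m * Dr := hBtoReal
    _ ≤ (m : ℝ) ^ (-(((k : ℝ) - min ε 1) * m)) := key
    _ ≤ _ := hfinal
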